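/- Let (X, ‖·‖) be a Banach space and let T : X → X be a (k, h)-enriched Bianchini mapping, i.e., there exist constants k ∈ [0, ∞) and h ∈ [0, 1) such that ‖k(x−y) + Tx − Ty‖ ≤ h·max{‖x − Tx‖, ‖y − Ty‖} for all x, y ∈ X. Then T has exactly one fixed point, i.e., Fix(T) = {p} for some p ∈ X. -/

import Mathlib

theorem enrichedBianchini_fixedPointSet_singleton
    {X : Type*} [NormedAddCommGroup X] [NormedSpace ℝ X] [CompleteSpace X]
    (T : X → X) (k h : ℝ) (hk : 0 ≤ k) (hh0 : 0 ≤ h) (hh : h < 1)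
    (hT : ∀ x y : X, ‖k • (x - y) + (T x - T y)‖ ≤ h * max ‖x - T x‖ ‖y - T y‖) :
    ∃ p : X, {x : X | T x = x} = {p} := by
  set c : ℝ := (k + 1)⁻¹ with hcdef
  have hk1 : (0:ℝ) < k + 1 := by linarith
  have hc : 0 < c := inv_pos.mpr hk1
  set S : X → X := fun x => x + c • (T x - x) with hSdef
  have hxS : ∀ x, x - S x = c • (x - T x) := by
    intro x
    show x - (x + c • (T x - x)) = c • (x - T x)
    module
  have hck : c * k = 1 - c := by
    rw [hcdef, eq_sub_iff_add_eq, ← mul_add_one (k + 1)⁻¹ k, add_comm k 1,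
      inv_mul_cancel₀ (by rw [add_comm]; exact ne_of_gt hk1)]
  have hSS : ∀ x y, S x - S y = c • (k • (x - y) + (T x - T y)) := by
    intro x y
    show (x + c • (T x - x)) - (y + c • (T y - y)) = c • (k • (x - y) + (T x - T y))
    match_scalars
    · linarith [hck]
    · ring
    · linarith [hck]
    · ring
  have key : ∀ x y, ‖S x - S y‖ ≤ h * max ‖x - S x‖ ‖y - S y‖ := by
    intro x y
    rw [hSS, hxS x, hxS y, norm_smul, norm_smul, norm_smul,
      Real.norm_of_nonneg hc.le]
    rw [← mul_max_of_nonneg _ _ hc.le]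
    calc c * ‖k • (x - y) + (T x - T y)‖
        ≤ c * (h * max ‖x - T x‖ ‖y - T y‖) :=
          mul_le_mul_of_nonneg_left (hT x y) hc.le
      _ = h * (c * max ‖x - T x‖ ‖y - T y‖) := by ring
  -- Picard iteration
  set x : ℕ → X := fun n => S^[n] 0 with hxdef
  have hx : ∀ n, x (n + 1) = S (x n) := by
    intro n; simp only [hxdef]; exact Function.iterate_succ_apply' S n 0
  set d : ℕ → ℝ := fun n => ‖x n - x (n + 1)‖ with hddef
  have hd0 : ∀ n, 0 ≤ d n := fun n => norm_nonneg _
  have hd : ∀ n, d (n + 1) ≤ h * d n := by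
    intro n
    have := key (x n) (x (n + 1))
    rw [← hx n, ← hx (n + 1)] at this
    rcases le_total (d (n + 1)) (d n) with hle | hle
    · calc d (n + 1) ≤ h * max (d n) (d (n + 1)) := this
        _ = h * d n := by rw [max_eq_left hle]
    · have h2 : d (n + 1) ≤ h * d (n + 1) := by
        calc d (n + 1) ≤ h * max (d n) (d (n + 1)) := this
          _ = h * d (n + 1) := by rw [max_eq_right hle]
      nlinarith [hd0 n, hd0 (n + 1), mul_nonneg hh0 (hd0 n)]
  have hgeo : ∀ n, d n ≤ d 0 * h ^ n := by
    intro n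
    induction n with
    | zero => simp
    | succ n ih =>
      calc d (n + 1) ≤ h * d n := hd n
        _ ≤ h * (d 0 * h ^ n) := mul_le_mul_of_nonneg_left ih hh0
        _ = d 0 * h ^ (n + 1) := by ring
  have hcauchy : CauchySeq x :=
    cauchySeq_of_le_geometric h (d 0) hh
      (fun n => by simpa [dist_eq_norm] using hgeo n)
  obtain ⟨p, hp⟩ := cauchySeq_tendsto_of_complete hcauchy
  have hdto : Filter.Tendsto d Filter.atTop (nhds 0) := by
    have h1 : Filter.Tendsto (fun n => d 0 * h ^ n) Filter.atTop (nhds 0) := by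
      simpa using (tendsto_pow_atTop_nhds_zero_of_lt_one hh0 hh).const_mul (d 0)
    exact squeeze_zero hd0 hgeo h1
  -- S p = p
  have hxp1 : Filter.Tendsto (fun n => ‖x (n + 1) - p‖) Filter.atTop (nhds 0) := by
    have h1 : Filter.Tendsto (fun n => x (n + 1)) Filter.atTop (nhds p) :=
      hp.comp (Filter.tendsto_add_atTop_nat 1)
    exact tendsto_iff_norm_sub_tendsto_zero.mp h1
  have hSp : S p = p := by
    have hbound : ∀ n, ‖p - S p‖ ≤ ‖p - x (n + 1)‖ + h * max (d n) ‖p - S p‖ := by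
      intro n
      calc ‖p - S p‖ = ‖(p - x (n + 1)) + (x (n + 1) - S p)‖ := by abel_nf
        _ ≤ ‖p - x (n + 1)‖ + ‖x (n + 1) - S p‖ := norm_add_le _ _
        _ ≤ ‖p - x (n + 1)‖ + h * max (d n) ‖p - S p‖ := by
            have := key (x n) p
            rw [← hx n] at this
            exact add_le_add_right (le_of_eq rfl) _ |>.trans (by
              exact add_le_add_right this _)
    have hlim : Filter.Tendsto
        (fun n => ‖p - x (n + 1)‖ + h * max (d n) ‖p - S p‖)
        Filter.atTop (nhds (0 + h * max 0 ‖p - S p‖)) := by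
      apply Filter.Tendsto.add
      · simpa [norm_sub_rev] using hxp1
      · exact (tendsto_const_nhds.mul (hdto.max tendsto_const_nhds)).congr (fun n => rfl)
    have hle : ‖p - S p‖ ≤ 0 + h * max 0 ‖p - S p‖ :=
      ge_of_tendsto' hlim hbound
    rw [max_eq_right (norm_nonneg _), zero_add] at hle
    have : ‖p - S p‖ = 0 := by nlinarith [norm_nonneg (p - S p)]
    have h0 : p - S p = 0 := norm_eq_zero.mp this
    exact (sub_eq_zero.mp h0).symm
  have hfix : ∀ q : X, T q = q ↔ S q = q := by
    intro q
    constructor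
    · intro hq; simp [hSdef, hq]
    · intro hq
      have h1 : q - S q = c • (q - T q) := hxS q
      rw [hq, sub_self] at h1
      have h2 : q - T q = 0 := by
        rcases smul_eq_zero.mp h1.symm with h | h
        · exact absurd h (ne_of_gt hc)
        · exact h
      exact (sub_eq_zero.mp h2).symm
  refine ⟨p, ?_⟩
  ext q
  simp only [Set.mem_setOf_eq, Set.mem_singleton_iff]
  constructor
  · intro hq
    have hSq : S q = q := (hfix q).mp hq
    have := key q p
    rw [hSq, hSp] at this
    simp only [sub_self, norm_zero] at this
    have : ‖q - p‖ ≤ h * max ‖q - q‖ ‖p - p‖ := by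
      calc ‖q - p‖ = ‖S q - S p‖ := by rw [hSq, hSp]
        _ ≤ h * max ‖q - S q‖ ‖p - S p‖ := key q p
        _ = h * max ‖q - q‖ ‖p - p‖ := by rw [hSq, hSp]
    simp only [sub_self, norm_zero, max_self, mul_zero] at this
    have h0 : ‖q - p‖ = 0 := le_antisymm this (norm_nonneg _)
    exact sub_eq_zero.mp (norm_eq_zero.mp h0)
  · intro hq
    subst hq
    exact (hfix q).mpr hSp
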